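/- For a real number q with 0<q<1 and integers n ≥ l ≥ 1, ∑_{k=l}^n (q^k/[k]_q^2) · ([k choose l]_q / [k+l choose l]_q) = (q^l/[l]_q^2) · ([n choose l]_q / [n+l choose l]_q). -/

import Mathlib

open Finset

/-- q-analogue of a natural number: [m]_q = (1-q^m)/(1-q). -/
noncomputable def qnum (q : ℝ) (m : ℕ) : ℝ := (1 - q ^ m) / (1 - q)

/-- q-Pochhammer (q;q)_n = ∏_{k=0}^{n-1} (1 - q^{k+1}). -/
noncomputable def qPoch (q : ℝ) (n : ℕ) : ℝ := ∏ k ∈ Finset.range n, (1 - q ^ (k + 1))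

/-- Gaussian q-binomial coefficient, 0 when m > n. -/
noncomputable def qbinom (q : ℝ) (n m : ℕ) : ℝ :=
  if m ≤ n then qPoch q n / (qPoch q m * qPoch q (n - m)) else 0

/-- q-multiple harmonic star sum H_n^*[s₁,…,s_m]. -/
noncomputable def qHstar (q : ℝ) : List ℕ → ℕ → ℝ
  | [], _ => 1
  | s :: rest, n => ∑ k ∈ Finset.Icc 1 n, q ^ k / qnum q k ^ s * qHstar q rest k

/-- q-multiple zeta star value ζ_q^*[s₁,…,s_m]. -/
noncomputable def qZetaStar (q : ℝ) : List ℕ → ℝ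
  | [] => 1
  | s :: rest => ∑' k : ℕ, q ^ (k + 1) / qnum q (k + 1) ^ s * qHstar q rest (k + 1)

/-- strict multiple harmonic sum ∑_{n ≥ k₁ > … > k_r ≥ 1} ∏ 1/k_j^{p_j}. -/
noncomputable def Hstrict : List ℕ → ℕ → ℝ
  | [], _ => 1
  | p :: rest, n => ∑ k ∈ Finset.Icc 1 n, (1 : ℝ) / (k : ℝ) ^ p * Hstrict rest (k - 1)

/-- binomial-weighted strict multiple harmonic sum Ĥ_n(p). -/
noncomputable def Hhat : List ℕ → ℕ → ℝ
  | [], _ => 1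
  | p :: rest, n => ∑ k ∈ Finset.Icc 1 n,
      ((n.choose k : ℝ) / ((n + k).choose n)) * ((1 : ℝ) / (k : ℝ) ^ p) * Hstrict rest (k - 1)

/-- ordinary multiple harmonic star sum H_n^*(s₁,…,s_m). -/
noncomputable def HstarO : List ℕ → ℕ → ℝ
  | [], _ => 1
  | s :: rest, n => ∑ k ∈ Finset.Icc 1 n, (1 : ℝ) / (k : ℝ) ^ s * HstarO rest k

/-- ordinary multiple zeta star value. -/
noncomputable def zetaStarO : List ℕ → ℝ
  | [] => 1
  | s :: rest => ∑' k : ℕ, (1 : ℝ) / ((k : ℝ) + 1) ^ s * HstarO rest (k + 1)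

/-- Merge a list of parts according to a comma(true)/plus(false) pattern. -/
def mergeComp : ℕ → List ℕ → List Bool → List ℕ
  | a, [], _ => [a]
  | a, _ :: _, [] => [a]
  | a, b :: t, true :: bs => a :: mergeComp b t bs
  | a, b :: t, false :: bs => mergeComp (a + b) t bs

lemma one_sub_pow_pos' (q : ℝ) (hq0 : 0 < q) (hq1 : q < 1) (m : ℕ) (hm : 1 ≤ m) :
    0 < 1 - q ^ m := by
  have : q ^ m < 1 := pow_lt_one₀ hq0.le hq1 (by omega)
  linarith

lemma qPoch_pos (q : ℝ) (hq0 : 0 < q) (hq1 : q < 1) (m : ℕ) : 0 < qPoch q m := by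
  unfold qPoch
  exact Finset.prod_pos fun k _ => one_sub_pow_pos' q hq0 hq1 (k + 1) (by omega)

lemma qPoch_succ (q : ℝ) (m : ℕ) : qPoch q (m + 1) = qPoch q m * (1 - q ^ (m + 1)) := by
  unfold qPoch; rw [Finset.prod_range_succ]

theorem stmt3 (q : ℝ) (hq0 : 0 < q) (hq1 : q < 1) (n l : ℕ) (hl : 1 ≤ l) (hln : l ≤ n) :
    ∑ k ∈ Finset.Icc l n, q ^ k / qnum q k ^ 2 * (qbinom q k l / qbinom q (k + l) l)
    = q ^ l / qnum q l ^ 2 * (qbinom q n l / qbinom q (n + l) l) := by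
  induction n, hln using Nat.le_induction with
  | base => simp
  | succ n hn ih =>
    rw [Finset.sum_Icc_succ_top (by omega), ih]
    obtain ⟨a, rfl⟩ : ∃ a, n = a + l := ⟨n - l, by omega⟩
    have h1q : (1 : ℝ) - q ≠ 0 := by linarith
    have hpl : (1 : ℝ) - q ^ l ≠ 0 := (one_sub_pow_pos' q hq0 hq1 l hl).ne'
    have hp1 : (1 : ℝ) - q ^ (a + 1) ≠ 0 :=
      (one_sub_pow_pos' q hq0 hq1 (a + 1) (by omega)).ne'
    have hp2 : (1 : ℝ) - q ^ (a + l + 1) ≠ 0 :=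
      (one_sub_pow_pos' q hq0 hq1 (a + l + 1) (by omega)).ne'
    have hp3 : (1 : ℝ) - q ^ (a + l + l + 1) ≠ 0 :=
      (one_sub_pow_pos' q hq0 hq1 (a + l + l + 1) (by omega)).ne'
    have hP1 : qPoch q a ≠ 0 := (qPoch_pos q hq0 hq1 a).ne'
    have hP2 : qPoch q l ≠ 0 := (qPoch_pos q hq0 hq1 l).ne'
    have hP3 : qPoch q (a + l) ≠ 0 := (qPoch_pos q hq0 hq1 (a + l)).ne'
    have hP4 : qPoch q (a + l + l) ≠ 0 := (qPoch_pos q hq0 hq1 (a + l + l)).ne'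
    have e1 : a + l + 1 - l = a + 1 := by omega
    have e2 : a + l - l = a := by omega
    have e3 : a + l + 1 + l = a + l + l + 1 := by omega
    simp only [qbinom, qnum, if_pos (by omega : l ≤ a + l + 1),
      if_pos (by omega : l ≤ a + l), if_pos (by omega : l ≤ a + l + l),
      if_pos (by omega : l ≤ a + l + 1 + l), e1, e2, e3]
    rw [if_pos (by omega : l ≤ a + l + l + 1),
      show a + l + l + 1 - l = a + l + 1 by omega,
      show a + l + l - l = a + l by omega]
    rw [qPoch_succ q (a + l), qPoch_succ q a, qPoch_succ q (a + l + l)]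
    field_simp
    ring
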